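/- Let W ⊂ ℝ/ℤ satisfy the Divisibility Condition with |W| ≤ 4, and let σ be a nontrivial rotation of ℝ/ℤ (a map x ↦ x + α with α ∉ ℤ). Then every orbit of σ on ℝ/ℤ contains at least one element not in W; moreover, if σ has order at least 3 (including infinite order), then every orbit of σ contains at least two elements not in W. -/

import Mathlib

/-- The circle `ℝ/ℤ`. -/
abbrev Circle1 := AddCircle (1 : ℝ)

/-- `Aut(ℝ/ℤ)`: the rotations `x ↦ x + α` and the reflections `x ↦ β - x`. -/
def IsAutCirc (f : Circle1 → Circle1) : Prop :=
  (∃ α : Circle1, ∀ x, f x = x + α) ∨ (∃ β : Circle1, ∀ x, f x = β - x)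

/-- A `2`-coloring of `ℝ/ℤ` is distinguishing with respect to `Aut(ℝ/ℤ)` if the
only automorphism preserving it is the identity. -/
def DistinguishingC (c : Circle1 → Fin 2) : Prop :=
  ∀ f : Circle1 → Circle1, IsAutCirc f → (∀ x, c (f x) = c x) → f = id

/-- `W` is a fixing set for `Aut(ℝ/ℤ)`: every non-identity automorphism moves
some element of `W`. -/
def FixingSetC (W : Set Circle1) : Prop :=
  ∀ f : Circle1 → Circle1, IsAutCirc f → f ≠ id → ∃ s ∈ W, f s ≠ s

/-- The Divisibility Condition: `(W + i/k) ∩ W = ∅` for all `k ∈ {2,3,4,5}` and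
all `i ∈ {1, …, k-1}`. -/
def DivCond (W : Set Circle1) : Prop :=
  ∀ k ∈ ({2, 3, 4, 5} : Set ℕ), ∀ i : ℕ, 1 ≤ i → i < k →
    ((fun w => w + (((i : ℝ) / (k : ℝ) : ℝ) : Circle1)) '' W) ∩ W = ∅

/-- A nonzero torsion point of order dividing `n` in `ℝ/ℤ` is `i/n` for some
`1 ≤ i < n`. -/
lemma torsion_eq_frac (z : Circle1) (n : ℕ) (hn : 0 < n) (hz : z ≠ 0) (h : n • z = 0) :
    ∃ i : ℕ, 1 ≤ i ∧ i < n ∧ z = (((i : ℝ) / (n : ℝ) : ℝ) : Circle1) := by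
  have hfin : IsOfFinAddOrder z := isOfFinAddOrder_iff_nsmul_eq_zero.2 ⟨n, hn, h⟩
  obtain ⟨m, hgcd, hlt, he⟩ := AddCircle.exists_gcd_eq_one_of_isOfFinAddOrder hfin
  set d := addOrderOf z with hd
  have hdvd : d ∣ n := addOrderOf_dvd_of_nsmul_eq_zero h
  have hd1 : 1 < d := by
    rcases Nat.lt_or_ge d 2 with h2 | h2
    · interval_cases d
      · exact absurd (addOrderOf_eq_zero_iff.1 hd.symm) (not_not.2 hfin)
      · exact absurd (AddMonoid.addOrderOf_eq_one_iff.1 hd.symm) hz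
    · exact h2
  have hm1 : 1 ≤ m := by
    rcases Nat.eq_zero_or_pos m with rfl | h1
    · simp [Nat.gcd] at hgcd; omega
    · exact h1
  refine ⟨m * (n / d), ?_, ?_, ?_⟩
  · have : 0 < n / d := Nat.div_pos (Nat.le_of_dvd hn hdvd) (by omega)
    exact Nat.one_le_iff_ne_zero.2 (by positivity)
  · have hpos : 0 < n / d := Nat.div_pos (Nat.le_of_dvd hn hdvd) (by omega)
    calc m * (n / d) < d * (n / d) := Nat.mul_lt_mul_of_lt_of_le hlt le_rfl hpos
       _ = n := Nat.mul_div_cancel' hdvd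
  · rw [← he]
    congr 1
    rw [mul_one]
    obtain ⟨c, rfl⟩ := hdvd
    have hd0 : (d : ℝ) ≠ 0 := by positivity
    have hc0 : (c : ℝ) ≠ 0 := by
      have : 0 < c := by
        rcases Nat.eq_zero_or_pos c with rfl | h1
        · simp at hn
        · exact h1
      positivity
    push_cast
    field_simp
    ring
    rw [Nat.mul_div_cancel_left c (by omega : 0 < d)]

/-- Among six pairwise-distinct points, at least two avoid a set of size `≤ 4`. -/
lemma two_outside (W : Set Circle1) (hWfin : W.Finite) (hW : W.ncard ≤ 4)
    (g : ℕ → Circle1) (hg : ∀ i < 6, ∀ j < 6, g i = g j → i = j) :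
    ∃ i j, i < 6 ∧ j < 6 ∧ i ≠ j ∧ g i ∉ W ∧ g j ∉ W := by
  classical
  set S := (Finset.range 6).filter (fun j => g j ∈ W) with hS
  set T := (Finset.range 6).filter (fun j => g j ∉ W) with hT
  have hScard : S.card ≤ 4 := by
    have hinj : Set.InjOn g S := by
      intro a ha b hb hab
      simp only [hS, Finset.coe_filter, Set.mem_setOf_eq, Finset.mem_range] at ha hb
      exact hg a ha.1 b hb.1 hab
    have h1 : (S.image g).card = S.card := Finset.card_image_of_injOn hinj
    have h2 : S.image g ⊆ hWfin.toFinset := by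
      intro y hy
      obtain ⟨a, ha, rfl⟩ := Finset.mem_image.1 hy
      simp only [hS, Finset.mem_filter] at ha
      exact hWfin.mem_toFinset.2 ha.2
    have h3 := Finset.card_le_card h2
    rw [h1] at h3
    rw [← Set.ncard_eq_toFinset_card W hWfin] at h3
    omega
  have hsub : Finset.range 6 ⊆ S ∪ T := by
    intro a ha
    by_cases h : g a ∈ W
    · exact Finset.mem_union_left _ (Finset.mem_filter.2 ⟨ha, h⟩)
    · exact Finset.mem_union_right _ (Finset.mem_filter.2 ⟨ha, h⟩)
  have hsum : 6 ≤ S.card + T.card := by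
    calc 6 = (Finset.range 6).card := by simp
      _ ≤ (S ∪ T).card := Finset.card_le_card hsub
      _ ≤ S.card + T.card := Finset.card_union_le _ _
  have hT2 : 1 < T.card := by omega
  obtain ⟨a, ha, b, hb, hab⟩ := Finset.one_lt_card.1 hT2
  simp only [hT, Finset.mem_filter, Finset.mem_range] at ha hb
  exact ⟨a, b, ha.1, hb.1, hab, ha.2, hb.2⟩

/-- Let `W ⊂ ℝ/ℤ` satisfy the Divisibility Condition with `|W| ≤ 4`, and let
`σ : x ↦ x + α` be a nontrivial rotation.  Then every `σ`-orbit
`{x + j • α : j ∈ ℤ}` contains an element not in `W`; and if moreover `σ` has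
order at least `3` (where additive order `0` means infinite order), every
`σ`-orbit contains two distinct elements not in `W`. -/
theorem orbit_meets_complement (W : Set Circle1) (hWfin : W.Finite)
    (hW : W.ncard ≤ 4) (hdiv : DivCond W) (α : Circle1) (hα : α ≠ 0) :
    (∀ x : Circle1, ∃ j : ℤ, x + j • α ∉ W) ∧
    ((addOrderOf α = 0 ∨ 3 ≤ addOrderOf α) →
      ∀ x : Circle1, ∃ j j' : ℤ,
        x + j • α ≠ x + j' • α ∧ x + j • α ∉ W ∧ x + j' • α ∉ W) := by
  set n := addOrderOf α with hn
  have hn1 : n ≠ 1 := by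
    intro h
    exact hα (AddMonoid.addOrderOf_eq_one_iff.1 (hn ▸ h))
  -- Lemma A: for n ∈ {2,3,4,5}, no two points of W differ by r•α with n ∤ r.
  have lemA : n ∈ ({2, 3, 4, 5} : Set ℕ) → ∀ y : Circle1, ∀ r : ℤ,
      ¬ ((n : ℤ) ∣ r) → y ∈ W → y + r • α ∈ W → False := by
    intro hmem y r hr hy hyr
    have hnpos : 0 < n := by
      simp only [Set.mem_insert_iff, Set.mem_singleton_iff] at hmem
      omega
    have hz0 : r • α ≠ 0 := by
      intro h
      exact hr (addOrderOf_dvd_iff_zsmul_eq_zero.2 h)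
    have hnz : n • (r • α) = 0 := by
      rw [← natCast_zsmul, smul_smul, mul_comm, ← smul_smul, natCast_zsmul,
        addOrderOf_nsmul_eq_zero α, smul_zero]
    obtain ⟨i, hi1, hi2, hie⟩ := torsion_eq_frac (r • α) n hnpos hz0 hnz
    have hempty := hdiv n hmem i hi1 hi2
    have : y + r • α ∈ ((fun w => w + (((i : ℝ) / (n : ℝ) : ℝ) : Circle1)) '' W) ∩ W := by
      refine ⟨⟨y, hy, ?_⟩, hyr⟩
      rw [← hie]
    rw [hempty] at this
    exact this
  have hinj6 : (n = 0 ∨ 6 ≤ n) → ∀ x : Circle1, ∀ i : ℕ, i < 6 → ∀ j : ℕ, j < 6 →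
      x + (i : ℤ) • α = x + (j : ℤ) • α → i = j := by
    intro h6 x i hi j hj hij
    have h0 : ((i : ℤ) - (j : ℤ)) • α = 0 := by
      rw [sub_smul, sub_eq_zero]
      exact add_left_cancel hij
    have hd := addOrderOf_dvd_iff_zsmul_eq_zero.2 h0
    rw [← hn] at hd
    rcases h6 with h6 | h6
    · rw [h6] at hd
      have : (i : ℤ) - (j : ℤ) = 0 := by simpa using hd
      omega
    · have h5 : ((i : ℤ) - (j : ℤ)).natAbs < ((n : ℤ)).natAbs := by omega
      have := Int.eq_zero_of_dvd_of_natAbs_lt_natAbs hd h5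
      omega
  constructor
  · -- Part 1
    intro x
    by_cases h6 : n = 0 ∨ 6 ≤ n
    · obtain ⟨i, j, hi, hj, hij, hiW, _⟩ := two_outside W hWfin hW
        (fun j => x + (j : ℤ) • α) (hinj6 h6 x)
      exact ⟨(i : ℤ), hiW⟩
    · push_neg at h6
      have hmem : n ∈ ({2, 3, 4, 5} : Set ℕ) := by
        simp only [Set.mem_insert_iff, Set.mem_singleton_iff]
        omega
      have hn2 : 2 ≤ n := by
        simp only [Set.mem_insert_iff, Set.mem_singleton_iff] at hmem
        omega
      by_cases hx : x ∈ W
      · refine ⟨1, fun h => lemA hmem x 1 ?_ hx (by simpa using h)⟩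
        intro hd
        have := Int.le_of_dvd one_pos hd
        omega
      · exact ⟨0, by simpa using hx⟩
  · -- Part 2
    intro hord x
    by_cases h6 : n = 0 ∨ 6 ≤ n
    · obtain ⟨i, j, hi, hj, hij, hiW, hjW⟩ := two_outside W hWfin hW
        (fun j => x + (j : ℤ) • α) (hinj6 h6 x)
      exact ⟨(i : ℤ), (j : ℤ), fun h => hij (hinj6 h6 x i hi j hj h), hiW, hjW⟩
    · push_neg at h6
      have hn3 : 3 ≤ n := by
        rcases hord with h | h
        · omega
        · exact h
      have hmem : n ∈ ({2, 3, 4, 5} : Set ℕ) := by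
        simp only [Set.mem_insert_iff, Set.mem_singleton_iff]
        omega
      have hnd : ∀ r : ℤ, 1 ≤ r → r ≤ 2 → ¬ ((n : ℤ) ∣ r) := by
        intro r h1 h2 hd
        have := Int.le_of_dvd (by omega) hd
        omega
      have hne : ∀ i j : ℤ, 0 ≤ i → i < j → j ≤ 2 → x + i • α ≠ x + j • α := by
        intro i j h0 hij hj2 h
        have hz : (i - j) • α = 0 := by
          rw [sub_smul, sub_eq_zero]
          exact add_left_cancel h
        have hd := addOrderOf_dvd_iff_zsmul_eq_zero.2 hz
        rw [← hn] at hd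
        have hd' : (n : ℤ) ∣ (j - i) := by
          have := hd.neg_right
          rwa [neg_sub] at this
        exact hnd (j - i) (by omega) (by omega) hd'
      by_cases hx : x ∈ W
      · refine ⟨1, 2, hne 1 2 (by omega) (by omega) (by omega), ?_, ?_⟩
        · exact fun h => lemA hmem x 1 (hnd 1 le_rfl (by omega)) hx (by simpa using h)
        · exact fun h => lemA hmem x 2 (hnd 2 (by omega) le_rfl) hx (by simpa using h)
      · by_cases hx1 : x + (1 : ℤ) • α ∈ W
        · refine ⟨0, 2, hne 0 2 (by omega) (by omega) (by omega), by simpa using hx, ?_⟩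
          intro h
          apply lemA hmem (x + (1 : ℤ) • α) 1 (hnd 1 le_rfl (by omega)) hx1
          have he : x + (2 : ℤ) • α = x + (1 : ℤ) • α + (1 : ℤ) • α := by
            rw [add_assoc, ← add_smul]
            norm_num
          rwa [he] at h
        · exact ⟨0, 1, hne 0 1 (by omega) (by omega) (by omega), by simpa using hx, hx1⟩
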